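/- Let N ≥ 1, fix R₀ > 0 and ε > 0. Let (u_n) be a sequence in L²(ℝ^N) with sup_n ∫_{ℝ^N} u_n² dx < ∞, and let u ∈ L²(ℝ^N) with u ≠ 0, such that u_n → u in L²(B_R(0)) for every R > 0. Then Q_ε(u_n) → Q_ε(u) in ℝ^N. -/

import Mathlib

open MeasureTheory Filter


lemma abs_sq_sub_sq_le (t a b : ℝ) (ht : 0 < t) :
    |a^2 - b^2| ≤ (1+1/t)*(a-b)^2 + t*b^2 := by
  have expand : (1+1/t)*(a-b)^2 + t*b^2 = ((t+1)*(a-b)^2 + t^2*b^2)/t := by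
    field_simp
  rw [expand, le_div_iff₀ ht]
  rcases abs_cases (a^2 - b^2) with ⟨heq, _⟩ | ⟨heq, _⟩ <;> rw [heq] <;>
    nlinarith [sq_nonneg (a-b-t*b), sq_nonneg (a-b+t*b), mul_nonneg ht.le (sq_nonneg (a-b))]

lemma key_tendsto {N : ℕ} {F : Type*} [NormedAddCommGroup F] [NormedSpace ℝ F]
    [CompleteSpace F]
    (φ : EuclideanSpace ℝ (Fin N) → F) (hφm : AEStronglyMeasurable φ volume)
    (C : ℝ) (hC : ∀ x, ‖φ x‖ ≤ C)
    (hφ0 : ∀ δ : ℝ, 0 < δ → ∃ R : ℝ, 0 < R ∧ ∀ x, R ≤ ‖x‖ → ‖φ x‖ ≤ δ)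
    (u : ℕ → EuclideanSpace ℝ (Fin N) → ℝ) (hun : ∀ n, MemLp (u n) 2 volume)
    (M : ℝ) (hM : ∀ n, (∫ x, (u n x)^2) ≤ M)
    (v : EuclideanSpace ℝ (Fin N) → ℝ) (hv : MemLp v 2 volume)
    (hconv : ∀ R : ℝ, 0 < R →
      Tendsto (fun n => ∫ x in Metric.ball (0 : EuclideanSpace ℝ (Fin N)) R,
        (u n x - v x) ^ 2) atTop (nhds 0)) :
    Tendsto (fun n => ∫ x, (u n x)^2 • φ x) atTop (nhds (∫ x, (v x)^2 • φ x)) := by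
  have hφtop : MemLp φ ⊤ volume := memLp_top_of_bound hφm C (Filter.Eventually.of_forall hC)
  have hCnn : (0:ℝ) ≤ C := le_trans (norm_nonneg _) (hC 0)
  have hVnn : (0:ℝ) ≤ ∫ x, (v x)^2 := integral_nonneg fun x => sq_nonneg _
  set V := ∫ x, (v x)^2 with hVdef
  have hMnn : (0:ℝ) ≤ M := le_trans (integral_nonneg fun x => sq_nonneg _) (hM 0)
  have hIv : Integrable (fun x => (v x)^2 • φ x) volume :=
    hv.integrable_sq.smul_of_top_left hφtop
  have hIn : ∀ n, Integrable (fun x => (u n x)^2 • φ x) volume := fun n =>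
    (hun n).integrable_sq.smul_of_top_left hφtop
  rw [Metric.tendsto_atTop]
  intro δ hδ
  have ht : (0:ℝ) < δ / (3*(C+1)*(V+1)) := by positivity
  set t := δ / (3*(C+1)*(V+1)) with htdef
  have hδ' : (0:ℝ) < δ / (3*(M+V+1)) := by positivity
  set δ' := δ / (3*(M+V+1)) with hδ'def
  obtain ⟨R, hRpos, hR⟩ := hφ0 δ' hδ'
  set K := C*(1+1/t) + 1 with hKdef
  have hKpos : (0:ℝ) < K := by positivity
  have hsmall : (0:ℝ) < δ/(3*K) := by positivity
  have hev : ∀ᶠ n in atTop, (∫ x in Metric.ball (0:EuclideanSpace ℝ (Fin N)) R,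
      (u n x - v x)^2) < δ/(3*K) := (hconv R hRpos).eventually_lt_const hsmall
  rw [← eventually_atTop]
  filter_upwards [hev] with n hn
  rw [dist_eq_norm]
  have hIdnv : Integrable (fun x => (u n x - v x)^2) volume := by
    simpa using ((hun n).sub hv).integrable_sq
  have hsub : (∫ x, (u n x)^2 • φ x) - (∫ x, (v x)^2 • φ x)
      = ∫ x, ((u n x)^2 - (v x)^2) • φ x := by
    rw [← integral_sub (hIn n) hIv]
    congr 1; ext x; rw [sub_smul]
  rw [hsub]
  have hIW : Integrable (fun x => ((u n x)^2 - (v x)^2) • φ x) volume := by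
    have := (hIn n).sub hIv
    exact this.congr (Filter.Eventually.of_forall fun x => by simp [sub_smul])
  set B := Metric.ball (0:EuclideanSpace ℝ (Fin N)) R with hBdef
  rw [← integral_add_compl (Metric.isOpen_ball.measurableSet) hIW]
  -- Bound on the ball
  have hbd1 : ‖∫ x in B, ((u n x)^2 - (v x)^2) • φ x‖
      ≤ C*(1+1/t) * (∫ x in B, (u n x - v x)^2) + C*t*(∫ x in B, (v x)^2) := by
    have hb : Integrable (fun x => C*(1+1/t)*(u n x - v x)^2 + C*t*(v x)^2)
        (volume.restrict B) :=
      ((hIdnv.const_mul _).add (hv.integrable_sq.const_mul _)).restrict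
    have hptwise : ∀ x, ‖((u n x)^2 - (v x)^2) • φ x‖
        ≤ C*(1+1/t)*(u n x - v x)^2 + C*t*(v x)^2 := by
      intro x
      rw [norm_smul, Real.norm_eq_abs]
      calc |(u n x)^2 - (v x)^2| * ‖φ x‖
          ≤ ((1+1/t)*(u n x - v x)^2 + t*(v x)^2) * C :=
            mul_le_mul (abs_sq_sub_sq_le t _ _ ht) (hC x) (norm_nonneg _) (by positivity)
        _ = C*(1+1/t)*(u n x - v x)^2 + C*t*(v x)^2 := by ring
    calc ‖∫ x in B, ((u n x)^2 - (v x)^2) • φ x‖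
        ≤ ∫ x in B, (C*(1+1/t)*(u n x - v x)^2 + C*t*(v x)^2) :=
          norm_integral_le_of_norm_le hb (Filter.Eventually.of_forall hptwise)
      _ = C*(1+1/t) * (∫ x in B, (u n x - v x)^2) + C*t*(∫ x in B, (v x)^2) := by
          rw [integral_add (hIdnv.const_mul _).restrict (hv.integrable_sq.const_mul _).restrict,
            integral_const_mul, integral_const_mul]
  -- Bound outside the ball
  have hbd2 : ‖∫ x in Bᶜ, ((u n x)^2 - (v x)^2) • φ x‖
      ≤ δ' * ((∫ x, (u n x)^2) + V) := by
    have hb : Integrable (fun x => δ' * ((u n x)^2 + (v x)^2))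
        (volume.restrict Bᶜ) :=
      (((hun n).integrable_sq.add hv.integrable_sq).const_mul _).restrict
    have hae : ∀ᵐ x ∂(volume.restrict Bᶜ), ‖((u n x)^2 - (v x)^2) • φ x‖
        ≤ δ' * ((u n x)^2 + (v x)^2) := by
      rw [ae_restrict_iff' Metric.isOpen_ball.measurableSet.compl]
      refine Filter.Eventually.of_forall fun x hx => ?_
      have hxR : R ≤ ‖x‖ := by
        have := hx
        simp only [hBdef, Set.mem_compl_iff, Metric.mem_ball, dist_zero_right, not_lt] at this
        exact this
      have hφx : ‖φ x‖ ≤ δ' := hR x hxR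
      have habs : |(u n x)^2 - (v x)^2| ≤ (u n x)^2 + (v x)^2 := by
        rcases abs_cases ((u n x)^2 - (v x)^2) with ⟨h,_⟩|⟨h,_⟩ <;>
          nlinarith [sq_nonneg (u n x), sq_nonneg (v x)]
      rw [norm_smul, Real.norm_eq_abs]
      calc |(u n x)^2 - (v x)^2| * ‖φ x‖
          ≤ ((u n x)^2 + (v x)^2) * δ' :=
            mul_le_mul habs hφx (norm_nonneg _) (by positivity)
        _ = δ' * ((u n x)^2 + (v x)^2) := by ring
    calc ‖∫ x in Bᶜ, ((u n x)^2 - (v x)^2) • φ x‖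
        ≤ ∫ x in Bᶜ, δ' * ((u n x)^2 + (v x)^2) := norm_integral_le_of_norm_le hb hae
      _ = δ' * ((∫ x in Bᶜ, (u n x)^2) + ∫ x in Bᶜ, (v x)^2) := by
          rw [integral_const_mul,
            integral_add ((hun n).integrable_sq.restrict) (hv.integrable_sq.restrict)]
      _ ≤ δ' * ((∫ x, (u n x)^2) + V) := by
          apply mul_le_mul_of_nonneg_left _ hδ'.le
          have h1 := setIntegral_le_integral (μ := volume) (s := Bᶜ)
            (hun n).integrable_sq (Filter.Eventually.of_forall fun x => sq_nonneg _)
          have h2 := setIntegral_le_integral (μ := volume) (s := Bᶜ)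
            hv.integrable_sq (Filter.Eventually.of_forall fun x => sq_nonneg _)
          exact add_le_add h1 h2
  -- combine
  have hAnn : (0:ℝ) ≤ ∫ x in B, (u n x - v x)^2 := integral_nonneg fun x => sq_nonneg _
  have h1 : C*(1+1/t) * (∫ x in B, (u n x - v x)^2) < δ/3 := by
    calc C*(1+1/t) * (∫ x in B, (u n x - v x)^2)
        ≤ K * (∫ x in B, (u n x - v x)^2) :=
          mul_le_mul_of_nonneg_right (by simp [hKdef]) hAnn
      _ < K * (δ/(3*K)) := by exact mul_lt_mul_of_pos_left hn hKpos
      _ = δ/3 := by field_simp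
  have hbv : (∫ x in B, (v x)^2) ≤ V :=
    setIntegral_le_integral hv.integrable_sq (Filter.Eventually.of_forall fun x => sq_nonneg _)
  have h2 : C*t*(∫ x in B, (v x)^2) < δ/3 := by
    have hCV : C*(∫ x in B, (v x)^2) < (C+1)*(V+1) := by
      have hBnn : (0:ℝ) ≤ ∫ x in B, (v x)^2 := integral_nonneg fun x => sq_nonneg _
      nlinarith
    calc C*t*(∫ x in B, (v x)^2) = t*(C*(∫ x in B, (v x)^2)) := by ring
      _ < t*((C+1)*(V+1)) := mul_lt_mul_of_pos_left hCV ht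
      _ = δ/3 := by rw [htdef]; field_simp
  have h3 : δ' * ((∫ x, (u n x)^2) + V) < δ/3 := by
    have hu2 : (∫ x, (u n x)^2) ≤ M := hM n
    have : (∫ x, (u n x)^2) + V < M + V + 1 := by linarith
    calc δ' * ((∫ x, (u n x)^2) + V) ≤ δ' * (M + V) := by
          apply mul_le_mul_of_nonneg_left (by linarith) hδ'.le
      _ < δ' * (M+V+1) := by apply mul_lt_mul_of_pos_left (by linarith) hδ'
      _ = δ/3 := by rw [hδ'def]; field_simp
  calc ‖(∫ x in B, ((u n x)^2 - (v x)^2) • φ x) + ∫ x in Bᶜ, ((u n x)^2 - (v x)^2) • φ x‖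
      ≤ ‖∫ x in B, ((u n x)^2 - (v x)^2) • φ x‖ + ‖∫ x in Bᶜ, ((u n x)^2 - (v x)^2) • φ x‖ :=
        norm_add_le _ _
    _ < δ := by linarith



/-- The truncation map `χ(x) = x` if `|x| ≤ R₀`, `χ(x) = R₀·x/|x|` if `|x| > R₀`. -/
noncomputable def chi {N : ℕ} (R₀ : ℝ) (x : EuclideanSpace ℝ (Fin N)) :
    EuclideanSpace ℝ (Fin N) :=
  if ‖x‖ ≤ R₀ then x else (R₀ / ‖x‖) • x

/-- The barycenter-type map
`Q_ε(u) = (∫ χ(εx)·g(εx)·u(x)² dx) / (∫ g(εx)·u(x)² dx)`. -/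
noncomputable def Qeps {N : ℕ} (R₀ : ℝ) (g : EuclideanSpace ℝ (Fin N) → ℝ) (ε : ℝ)
    (u : EuclideanSpace ℝ (Fin N) → ℝ) : EuclideanSpace ℝ (Fin N) :=
  (∫ x, g (ε • x) * (u x) ^ 2)⁻¹ • ∫ x, (g (ε • x) * (u x) ^ 2) • chi R₀ (ε • x)

/-- Fix `R₀ > 0`, `ε > 0` and `g` continuous, positive, vanishing at
infinity. If `(u_n) ⊂ L²(ℝ^N)` has uniformly bounded `L²` norms, `u ∈ L²(ℝ^N)` with
`u ≠ 0`, and `u_n → u` in `L²(B_R(0))` for every `R > 0`, then `Q_ε(u_n) → Q_ε(u)`. -/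
theorem Qeps_continuous_local_L2 (N : ℕ) (hN : 1 ≤ N) (R₀ : ℝ) (hR₀ : 0 < R₀)
    (g : EuclideanSpace ℝ (Fin N) → ℝ) (hg : Continuous g) (hgpos : ∀ x, 0 < g x)
    (hg0 : Tendsto g (cocompact _) (nhds 0))
    (ε : ℝ) (hε : 0 < ε)
    (u : ℕ → EuclideanSpace ℝ (Fin N) → ℝ) (hun : ∀ n, MemLp (u n) 2 volume)
    (hbdd : ∃ M : ℝ, ∀ n, (∫ x, (u n x) ^ 2) ≤ M)
    (v : EuclideanSpace ℝ (Fin N) → ℝ) (hv : MemLp v 2 volume)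
    (hvne : ¬ v =ᵐ[volume] 0)
    (hconv : ∀ R : ℝ, 0 < R →
      Tendsto (fun n => ∫ x in Metric.ball (0 : EuclideanSpace ℝ (Fin N)) R,
        (u n x - v x) ^ 2) atTop (nhds 0)) :
    Tendsto (fun n => Qeps R₀ g ε (u n)) atTop (nhds (Qeps R₀ g ε v)) := by
  classical
  obtain ⟨M, hM⟩ := hbdd
  -- norm bound for chi
  have hchi_norm : ∀ y : EuclideanSpace ℝ (Fin N), ‖chi R₀ y‖ ≤ R₀ := by
    intro y
    unfold chi
    split_ifs with h
    · exact h
    · push_neg at h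
      have hy : (0:ℝ) < ‖y‖ := lt_trans hR₀ h
      rw [norm_smul, Real.norm_eq_abs, abs_div, abs_of_pos hR₀, abs_of_pos hy,
        div_mul_cancel₀ _ hy.ne']
  have hchim : Measurable (chi (N := N) R₀) := by
    unfold chi
    exact Measurable.ite (measurableSet_le measurable_norm measurable_const)
      measurable_id ((measurable_const.div measurable_norm).smul measurable_id)
  -- bound for g
  obtain ⟨Cg, hCg⟩ : ∃ Cg : ℝ, ∀ y, |g y| ≤ Cg := by
    have hmem : {y : EuclideanSpace ℝ (Fin N) | |g y| < 1} ∈ cocompact _ := by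
      have := hg0 (Metric.ball_mem_nhds (0:ℝ) one_pos)
      exact Filter.mem_of_superset this fun y hy => by
        simpa [Metric.mem_ball, Real.dist_eq] using hy
    rw [mem_cocompact] at hmem
    obtain ⟨K, hK, hKsub⟩ := hmem
    obtain ⟨C0, hC0⟩ := hK.exists_bound_of_continuousOn hg.continuousOn
    refine ⟨max C0 1, fun y => ?_⟩
    by_cases hy : y ∈ K
    · exact le_trans (hC0 y hy) (le_max_left _ _)
    · exact le_trans (hKsub hy).le (le_max_right _ _)
  -- vanishing of g ∘ (ε • ·)
  have hvan : ∀ δ : ℝ, 0 < δ → ∃ R : ℝ, 0 < R ∧ ∀ x : EuclideanSpace ℝ (Fin N),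
      R ≤ ‖x‖ → |g (ε • x)| ≤ δ := by
    intro δ hδ
    have hmem : {y : EuclideanSpace ℝ (Fin N) | |g y| < δ} ∈ cocompact _ := by
      have := hg0 (Metric.ball_mem_nhds (0:ℝ) hδ)
      exact Filter.mem_of_superset this fun y hy => by
        simpa [Metric.mem_ball, Real.dist_eq] using hy
    rw [mem_cocompact] at hmem
    obtain ⟨K, hK, hKsub⟩ := hmem
    obtain ⟨r, hr⟩ := (Metric.isBounded_iff_subset_closedBall 0).1 hK.isBounded
    refine ⟨(max r 0 + 1)/ε, by positivity, fun x hx => ?_⟩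
    have hnotK : ε • x ∉ K := by
      intro hmemK
      have h1 := hr hmemK
      rw [Metric.mem_closedBall, dist_zero_right] at h1
      have h2 : max r 0 + 1 ≤ ‖ε • x‖ := by
        rw [norm_smul, Real.norm_eq_abs, abs_of_pos hε]
        calc max r 0 + 1 = ε * ((max r 0 + 1)/ε) := by field_simp
          _ ≤ ε * ‖x‖ := by apply mul_le_mul_of_nonneg_left hx hε.le
      have h3 : r ≤ max r 0 := le_max_left _ _
      linarith
    exact (hKsub hnotK).le
  -- the two weight functions
  set φ₁ : EuclideanSpace ℝ (Fin N) → ℝ := fun x => g (ε • x) with hφ₁def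
  set φ₂ : EuclideanSpace ℝ (Fin N) → EuclideanSpace ℝ (Fin N) :=
    fun x => g (ε • x) • chi R₀ (ε • x) with hφ₂def
  have hφ₁m : AEStronglyMeasurable φ₁ volume :=
    (hg.comp (continuous_const_smul ε)).aestronglyMeasurable
  have hφ₂m : AEStronglyMeasurable φ₂ volume :=
    (((hg.measurable.comp (measurable_const_smul ε))).smul
      (hchim.comp (measurable_const_smul ε))).aestronglyMeasurable
  have hφ₁C : ∀ x, ‖φ₁ x‖ ≤ Cg := fun x => by
    rw [Real.norm_eq_abs]; exact hCg _
  have hCgnn : (0:ℝ) ≤ Cg := le_trans (abs_nonneg _) (hCg 0)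
  have hφ₂C : ∀ x, ‖φ₂ x‖ ≤ Cg * R₀ := by
    intro x
    rw [hφ₂def]
    simp only
    rw [norm_smul, Real.norm_eq_abs]
    exact mul_le_mul (hCg _) (hchi_norm _) (norm_nonneg _) hCgnn
  have hφ₁0 : ∀ δ : ℝ, 0 < δ → ∃ R : ℝ, 0 < R ∧ ∀ x, R ≤ ‖x‖ → ‖φ₁ x‖ ≤ δ := by
    intro δ hδ
    obtain ⟨R, hRpos, hR⟩ := hvan δ hδ
    exact ⟨R, hRpos, fun x hx => by rw [Real.norm_eq_abs]; exact hR x hx⟩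
  have hφ₂0 : ∀ δ : ℝ, 0 < δ → ∃ R : ℝ, 0 < R ∧ ∀ x, R ≤ ‖x‖ → ‖φ₂ x‖ ≤ δ := by
    intro δ hδ
    obtain ⟨R, hRpos, hR⟩ := hvan (δ/R₀) (by positivity)
    refine ⟨R, hRpos, fun x hx => ?_⟩
    rw [hφ₂def]
    simp only
    rw [norm_smul, Real.norm_eq_abs]
    calc |g (ε • x)| * ‖chi R₀ (ε • x)‖ ≤ (δ/R₀) * R₀ :=
          mul_le_mul (hR x hx) (hchi_norm _) (norm_nonneg _) (by positivity)
      _ = δ := div_mul_cancel₀ _ hR₀.ne'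
  -- convergence of denominator and numerator
  have hDen0 := key_tendsto φ₁ hφ₁m Cg hφ₁C hφ₁0 u hun M hM v hv hconv
  have hNum0 := key_tendsto φ₂ hφ₂m (Cg * R₀) hφ₂C hφ₂0 u hun M hM v hv hconv
  have heq1 : ∀ w : EuclideanSpace ℝ (Fin N) → ℝ,
      (∫ x, g (ε • x) * (w x) ^ 2) = ∫ x, (w x)^2 • φ₁ x := by
    intro w
    congr 1
    ext x
    simp [hφ₁def, smul_eq_mul, mul_comm]
  have heq2 : ∀ w : EuclideanSpace ℝ (Fin N) → ℝ,
      (∫ x, (g (ε • x) * (w x) ^ 2) • chi R₀ (ε • x)) = ∫ x, (w x)^2 • φ₂ x := by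
    intro w
    congr 1
    ext x
    rw [hφ₂def]
    simp only
    rw [mul_comm, mul_smul]
  have hDen : Tendsto (fun n => ∫ x, g (ε • x) * (u n x) ^ 2) atTop
      (nhds (∫ x, g (ε • x) * (v x) ^ 2)) := by
    rw [show (fun n => ∫ x, g (ε • x) * (u n x) ^ 2)
        = fun n => ∫ x, (u n x)^2 • φ₁ x from funext fun n => heq1 (u n), heq1 v]
    exact hDen0
  have hNum : Tendsto (fun n => ∫ x, (g (ε • x) * (u n x) ^ 2) • chi R₀ (ε • x)) atTop
      (nhds (∫ x, (g (ε • x) * (v x) ^ 2) • chi R₀ (ε • x))) := by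
    rw [show (fun n => ∫ x, (g (ε • x) * (u n x) ^ 2) • chi R₀ (ε • x))
        = fun n => ∫ x, (u n x)^2 • φ₂ x from funext fun n => heq2 (u n), heq2 v]
    exact hNum0
  -- positivity of the limit denominator
  have hDint : Integrable (fun x => g (ε • x) * (v x) ^ 2) volume :=
    hv.integrable_sq.bdd_mul (hg.comp (continuous_const_smul ε)).aestronglyMeasurable
      (c := Cg) (Filter.Eventually.of_forall fun x => by rw [Real.norm_eq_abs]; exact hCg _)
  have hDnn : 0 ≤ fun x => g (ε • x) * (v x) ^ 2 := fun x =>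
    mul_nonneg (hgpos _).le (sq_nonneg _)
  have hDpos : 0 < ∫ x, g (ε • x) * (v x) ^ 2 := by
    rcases (integral_nonneg hDnn).lt_or_eq with h | h
    · exact h
    · exfalso
      apply hvne
      have h0 : (fun x => g (ε • x) * (v x) ^ 2) =ᵐ[volume] 0 :=
        (integral_eq_zero_iff_of_nonneg hDnn hDint).1 h.symm
      filter_upwards [h0] with x hx
      have hgx := hgpos (ε • x)
      simp only [Pi.zero_apply] at hx ⊢
      have h2 : (v x) ^ 2 = 0 := by nlinarith [sq_nonneg (v x)]
      exact pow_eq_zero_iff two_ne_zero |>.mp h2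
  unfold Qeps
  exact (hDen.inv₀ hDpos.ne').smul hNum
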